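/- arXiv:0705.3673 — 2 statements merged into one kernel-verified Lean document; each statement's English description precedes it below -/
import Mathlib

section
/- Let λ : ℕ → ℝ (indexed from 1) be nondecreasing with λ_k → ∞, let w > 0 be real, and set k := ⌊w⌋. Then the Legendre transform of R_1 at w satisfies: sup over z ∈ ℝ of ( w·z − R_1(z) ) = (w − k)·λ_{k+1} + Σ_{ℓ=1}^{k} λ_ℓ, and the supremum is attained at z = λ_{k+1}. -/
open Real Filter

/-- Riesz mean of order `σ` of the sequence `λ_1, λ_2, …` (here `lam (k+1)` is `λ_{k+1}`):
`R_σ(z) := Σ_{k ≥ 1} (z - λ_k)_+ ^ σ`. -/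
noncomputable def rieszMean (lam : ℕ → ℝ) (σ z : ℝ) : ℝ :=
  ∑' k : ℕ, (max (z - lam (k + 1)) 0) ^ σ

/-- The eigenvalue counting function `N(z) := #{k ≥ 1 : λ_k < z}`, as a real number. -/
noncomputable def countingFn (lam : ℕ → ℝ) (z : ℝ) : ℝ :=
  Nat.card {k : ℕ // 1 ≤ k ∧ lam k < z}

/-- The average `λ̄_j := (1/j) Σ_{ℓ=1}^j λ_ℓ` of the first `j` terms. -/
noncomputable def eigAvg (lam : ℕ → ℝ) (j : ℕ) : ℝ :=
  (∑ ℓ ∈ Finset.Icc 1 j, lam ℓ) / j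

lemma lam_mono_aux (lam : ℕ → ℝ)
    (hmono : ∀ k : ℕ, 1 ≤ k → lam k ≤ lam (k + 1)) :
    ∀ a b : ℕ, 1 ≤ a → a ≤ b → lam a ≤ lam b := by
  intro a b ha hab
  induction hab with
  | refl => exact le_rfl
  | step h ih => exact le_trans ih (hmono _ (le_trans ha h))

lemma riesz_summable (lam : ℕ → ℝ) (htend : Tendsto lam atTop atTop) (z : ℝ) :
    Summable (fun j : ℕ => max (z - lam (j + 1)) 0) := by
  obtain ⟨N, hN⟩ := (htend.eventually_ge_atTop z).exists_forall_of_atTop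
  apply summable_of_ne_finset_zero (s := Finset.range N)
  intro j hj
  simp only [Finset.mem_range, not_lt] at hj
  have : z ≤ lam (j + 1) := hN _ (by omega)
  simp [max_eq_right, sub_nonpos.mpr this]

/-- The Legendre transform of `R_1`: for `w > 0` and `k := ⌊w⌋`,
`sup_z (w z - R_1(z)) = (w - k) λ_{k+1} + Σ_{ℓ=1}^k λ_ℓ`, and the supremum is
attained at `z = λ_{k+1}`. -/
theorem legendre_transform_rieszMean_one (lam : ℕ → ℝ)
    (hmono : ∀ k : ℕ, 1 ≤ k → lam k ≤ lam (k + 1))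
    (htend : Tendsto lam atTop atTop)
    (w : ℝ) (hw : 0 < w) (k : ℕ) (hk : k = ⌊w⌋₊) :
    sSup (Set.range fun z : ℝ => w * z - rieszMean lam 1 z) =
        (w - (k : ℝ)) * lam (k + 1) + ∑ ℓ ∈ Finset.Icc 1 k, lam ℓ ∧
      w * lam (k + 1) - rieszMean lam 1 (lam (k + 1)) =
        (w - (k : ℝ)) * lam (k + 1) + ∑ ℓ ∈ Finset.Icc 1 k, lam ℓ := by
  have mono := lam_mono_aux lam hmono
  have hkw : (k : ℝ) ≤ w := by rw [hk]; exact Nat.floor_le hw.le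
  have hwk : w < (k : ℝ) + 1 := by rw [hk]; exact Nat.lt_floor_add_one w
  set L := lam (k + 1) with hL
  set S := ∑ j ∈ Finset.range k, lam (j + 1) with hSdef
  have hS : ∑ ℓ ∈ Finset.Icc 1 k, lam ℓ = S := by
    rw [← Finset.Ico_add_one_right_eq_Icc, Finset.sum_Ico_eq_sum_range]
    simp [hSdef, add_comm]
  -- rieszMean with σ = 1
  have hR : ∀ z : ℝ, rieszMean lam 1 z = ∑' j : ℕ, max (z - lam (j + 1)) 0 := by
    intro z; simp [rieszMean]
  -- lower bound by partial sums
  have hlow : ∀ (z : ℝ) (m : ℕ),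
      ∑ j ∈ Finset.range m, (z - lam (j + 1)) ≤ rieszMean lam 1 z := by
    intro z m
    rw [hR]
    calc ∑ j ∈ Finset.range m, (z - lam (j + 1))
        ≤ ∑ j ∈ Finset.range m, max (z - lam (j + 1)) 0 :=
          Finset.sum_le_sum fun j _ => le_max_left _ _
      _ ≤ ∑' j : ℕ, max (z - lam (j + 1)) 0 :=
          Summable.sum_le_tsum _ (fun j _ => le_max_right _ _) (riesz_summable lam htend z)
  -- value at L
  have hRL : rieszMean lam 1 L = (k : ℝ) * L - S := by
    rw [hR]
    rw [tsum_eq_sum (s := Finset.range k) ?_]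
    · have : ∀ j ∈ Finset.range k, max (L - lam (j + 1)) 0 = L - lam (j + 1) := by
        intro j hj
        simp only [Finset.mem_range] at hj
        have : lam (j + 1) ≤ L := mono (j + 1) (k + 1) (by omega) (by omega)
        exact max_eq_left (by linarith)
      rw [Finset.sum_congr rfl this, Finset.sum_sub_distrib, Finset.sum_const,
        Finset.card_range, nsmul_eq_mul]
    · intro j hj
      simp only [Finset.mem_range, not_lt] at hj
      have : L ≤ lam (j + 1) := mono (k + 1) (j + 1) (by omega) (by omega)
      simp [max_eq_right, sub_nonpos.mpr this]
  have hattain : w * L - rieszMean lam 1 L = (w - (k : ℝ)) * L + ∑ ℓ ∈ Finset.Icc 1 k, lam ℓ := by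
    rw [hRL, hS]; ring
  refine ⟨?_, hattain⟩
  -- upper bound
  have hub : ∀ z : ℝ, w * z - rieszMean lam 1 z ≤ (w - (k : ℝ)) * L + S := by
    intro z
    rcases le_or_gt z L with hzL | hLz
    · have h1 := hlow z k
      rw [Finset.sum_sub_distrib, Finset.sum_const, Finset.card_range, nsmul_eq_mul] at h1
      have h2 : (w - (k : ℝ)) * z ≤ (w - (k : ℝ)) * L :=
        mul_le_mul_of_nonneg_left hzL (by linarith)
      linarith
    · have h1 := hlow z (k + 1)
      rw [Finset.sum_sub_distrib, Finset.sum_const, Finset.card_range, nsmul_eq_mul,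
        Finset.sum_range_succ] at h1
      push_cast at h1
      have h2 : (w - ((k : ℝ) + 1)) * z ≤ (w - ((k : ℝ) + 1)) * L :=
        mul_le_mul_of_nonpos_left hLz.le (by linarith)
      linarith
  rw [hS]
  apply IsGreatest.csSup_eq
  constructor
  · refine ⟨L, ?_⟩
    simpa [hS] using hattain
  · rintro x ⟨z, rfl⟩
    exact hub z
end

section
/- Let d be a positive integer, let j ≥ 1 be an integer, and let λ : ℕ → ℝ (indexed from 1) be nondecreasing with λ_1 > 0. Suppose that for every z ≥ (1 + 4/d)·λ̄_j one has R_1(z) ≥ j · z^{1 + d/2} / ( (1 + d/4) · ((1 + 4/d)·λ̄_j)^{d/2} ). Then for every integer k with k ≥ j·(1 + d/2)/(1 + d/4), one has λ̄_k / λ̄_j ≤ 2 · ( (1 + d/4)/(1 + d/2) )^{1 + 2/d} · (k/j)^{2/d}. -/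
open Real Filter

lemma lam_mono {lam : ℕ → ℝ} (hmono : ∀ k : ℕ, 1 ≤ k → lam k ≤ lam (k + 1)) :
    ∀ a b : ℕ, 1 ≤ a → a ≤ b → lam a ≤ lam b := by
  intro a b ha hab
  induction b, hab using Nat.le_induction with
  | base => exact le_rfl
  | succ n hn ih => exact ih.trans (hmono n (ha.trans hn))

lemma sum_Icc_one (f : ℕ → ℝ) (k : ℕ) :
    ∑ ℓ ∈ Finset.Icc 1 k, f ℓ = ∑ i ∈ Finset.range k, f (i + 1) := by
  induction k with
  | zero => simp
  | succ n ih =>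
      rw [Finset.sum_Icc_succ_top (by omega), ih, Finset.sum_range_succ]

/-- The key Legendre-transform identity: at `z = λ_{k+1}` the Riesz mean `R_1`
equals `k z - Σ_{ℓ ≤ k} λ_ℓ`. -/
lemma riesz_at_eig {lam : ℕ → ℝ} (hmono : ∀ k : ℕ, 1 ≤ k → lam k ≤ lam (k + 1)) (k : ℕ) :
    rieszMean lam 1 (lam (k + 1)) =
      (k : ℝ) * lam (k + 1) - ∑ ℓ ∈ Finset.Icc 1 k, lam ℓ := by
  have h1 : rieszMean lam 1 (lam (k + 1)) =
      ∑ i ∈ Finset.range k, (lam (k + 1) - lam (i + 1)) := by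
    rw [rieszMean, tsum_eq_sum (s := Finset.range k) ?_]
    · refine Finset.sum_congr rfl fun i hi => ?_
      have hik : i + 1 ≤ k + 1 := by simp at hi; omega
      have : lam (i + 1) ≤ lam (k + 1) := lam_mono hmono _ _ (by omega) hik
      rw [max_eq_left (by linarith), Real.rpow_one]
    · intro i hi
      have hik : k + 1 ≤ i + 1 := by simp at hi; omega
      have : lam (k + 1) ≤ lam (i + 1) := lam_mono hmono _ _ (by omega) hik
      rw [max_eq_right (by linarith), Real.rpow_one]
  rw [h1, Finset.sum_sub_distrib, Finset.sum_const, sum_Icc_one]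
  simp [nsmul_eq_mul]

lemma eigAvg_pos {lam : ℕ → ℝ} (hmono : ∀ k : ℕ, 1 ≤ k → lam k ≤ lam (k + 1))
    (hpos : 0 < lam 1) {m : ℕ} (hm : 1 ≤ m) : 0 < eigAvg lam m := by
  have hs : 0 < ∑ ℓ ∈ Finset.Icc 1 m, lam ℓ := by
    apply Finset.sum_pos
    · intro ℓ hℓ
      simp only [Finset.mem_Icc] at hℓ
      exact lt_of_lt_of_le hpos (lam_mono hmono 1 ℓ le_rfl hℓ.1)
    · exact ⟨1, by simp [hm]⟩
  exact div_pos hs (by exact_mod_cast hm)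

set_option maxHeartbeats 1000000 in
/-- Corollary 8 (the paper's main Weyl-type bound): from the lower bound (2.27) on
`R_1`, for every `k ≥ j (1 + d/2)/(1 + d/4)`,
`λ̄_k / λ̄_j ≤ 2 ((1 + d/4)/(1 + d/2))^(1 + 2/d) (k/j)^(2/d)`. -/
theorem avg_ratio_weyl_bound (d : ℕ) (hd : 0 < d) (j : ℕ) (hj : 1 ≤ j)
    (lam : ℕ → ℝ)
    (hmono : ∀ k : ℕ, 1 ≤ k → lam k ≤ lam (k + 1))
    (hpos : 0 < lam 1)
    (hR1 : ∀ z : ℝ, (1 + 4 / (d : ℝ)) * eigAvg lam j ≤ z →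
      rieszMean lam 1 z ≥
        (j : ℝ) * z ^ (1 + (d : ℝ) / 2) /
          ((1 + (d : ℝ) / 4) *
            ((1 + 4 / (d : ℝ)) * eigAvg lam j) ^ ((d : ℝ) / 2))) :
    ∀ k : ℕ, (j : ℝ) * (1 + (d : ℝ) / 2) / (1 + (d : ℝ) / 4) ≤ (k : ℝ) →
      eigAvg lam k / eigAvg lam j ≤
        2 * ((1 + (d : ℝ) / 4) / (1 + (d : ℝ) / 2)) ^ (1 + 2 / (d : ℝ)) *
          ((k : ℝ) / (j : ℝ)) ^ (2 / (d : ℝ)) := by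
  intro k hk
  set D := (d : ℝ) with hDdef
  have hD0 : (0:ℝ) < D := by rw [hDdef]; exact_mod_cast hd
  have hj0 : (0:ℝ) < (j:ℝ) := by exact_mod_cast hj
  have h14 : (0:ℝ) < 1 + D/4 := by linarith
  have h12 : (0:ℝ) < 1 + D/2 := by linarith
  have h4D : (0:ℝ) < 1 + 4/D := by positivity
  have havgj : 0 < eigAvg lam j := eigAvg_pos hmono hpos hj
  set A := (1 + 4/D) * eigAvg lam j with hAdef
  have hA0 : 0 < A := mul_pos h4D havgj
  have hkj : j ≤ k := by
    have h1 : (j:ℝ) ≤ (j:ℝ) * (1 + D/2)/(1 + D/4) := by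
      rw [le_div_iff₀ h14]; nlinarith
    exact_mod_cast h1.trans hk
  have hk1 : 1 ≤ k := hj.trans hkj
  have hk0 : (0:ℝ) < (k:ℝ) := by exact_mod_cast hk1
  set C := (1 + D/4)/(1 + D/2) with hCdef
  have hC0 : 0 < C := div_pos h14 h12
  set T := (k:ℝ)/(j:ℝ) with hTdef
  have hT0 : 0 < T := div_pos hk0 hj0
  have hCT1 : 1 ≤ C * T := by
    rw [hCdef, hTdef, div_mul_div_comm, le_div_iff₀ (mul_pos h12 hj0)]
    have := (div_le_iff₀ h14).mp hk
    nlinarith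
  rw [div_le_iff₀ havgj,
    show eigAvg lam k = (∑ ℓ ∈ Finset.Icc 1 k, lam ℓ) / (k:ℝ) from rfl,
    div_le_iff₀ hk0]
  rcases le_or_gt A (lam (k + 1)) with hcase | hcase
  · -- Case A : `λ_{k+1} ≥ A`, use the hypothesis at `z = λ_{k+1}`.
    have hz0 : 0 < lam (k + 1) := lt_of_lt_of_le hA0 hcase
    have hR := hR1 (lam (k + 1)) hcase
    rw [riesz_at_eig hmono k] at hR
    set zs := (C * T) ^ (2/D) * A with hzsdef
    have hCT0 : (0:ℝ) < C * T := mul_pos hC0 hT0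
    have hzs0 : 0 < zs := mul_pos (Real.rpow_pos_of_pos hCT0 _) hA0
    have hAD : (0:ℝ) < A ^ (D/2) := Real.rpow_pos_of_pos hA0 _
    have hzsP : zs ^ (1 + D/2) = zs * ((C * T) * A ^ (D/2)) := by
      have hzsD : zs ^ (D/2) = (C * T) * A ^ (D/2) := by
        rw [hzsdef, Real.mul_rpow (Real.rpow_nonneg hCT0.le _) hA0.le,
          ← Real.rpow_mul hCT0.le]
        congr 1
        rw [show (2/D) * (D/2) = (1:ℝ) by field_simp, Real.rpow_one]
      rw [Real.rpow_add hzs0, Real.rpow_one, hzsD]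
    set w := lam (k + 1) / zs with hwdef
    have hw0 : 0 ≤ w := (div_pos hz0 hzs0).le
    have hzw : lam (k + 1) = w * zs := (div_mul_cancel₀ _ hzs0.ne').symm
    have hbern : (1 + D/2) * w - w ^ (1 + D/2) ≤ D/2 := by
      have h := one_add_mul_self_le_rpow_one_add (s := w - 1) (by linarith)
        (p := 1 + D/2) (by linarith)
      rw [show (1:ℝ) + (w - 1) = w by ring] at h
      linarith
    have hpow : lam (k + 1) ^ (1 + D/2) = w ^ (1 + D/2) * (zs * ((C * T) * A ^ (D/2))) := by
      rw [hzw, Real.mul_rpow hw0 hzs0.le, hzsP]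
    have h1 : (j:ℝ) * lam (k + 1) ^ (1 + D/2) / ((1 + D/4) * A ^ (D/2))
        = w ^ (1 + D/2) * ((k:ℝ) * zs) / (1 + D/2) := by
      rw [hpow, hCdef, hTdef]
      field_simp
    rw [h1, hzw] at hR
    have h3 : ∑ ℓ ∈ Finset.Icc 1 k, lam ℓ
        ≤ (k:ℝ) * zs / (1 + D/2) * ((1 + D/2) * w - w ^ (1 + D/2)) := by
      have expand : (k:ℝ) * zs / (1 + D/2) * ((1 + D/2) * w - w ^ (1 + D/2))
          = (k:ℝ) * (w * zs) - w ^ (1 + D/2) * ((k:ℝ) * zs) / (1 + D/2) := by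
        field_simp
      rw [expand]
      linarith
    have h4 : (k:ℝ) * zs / (1 + D/2) * ((1 + D/2) * w - w ^ (1 + D/2))
        ≤ (k:ℝ) * zs / (1 + D/2) * (D/2) :=
      mul_le_mul_of_nonneg_left hbern (by positivity)
    have heq : (k:ℝ) * zs / (1 + D/2) * (D/2)
        = 2 * C ^ (1 + 2/D) * T ^ (2/D) * eigAvg lam j * (k:ℝ) := by
      rw [hzsdef, Real.mul_rpow hC0.le hT0.le, Real.rpow_add hC0, Real.rpow_one,
        hAdef, hCdef]
      field_simp
      ring
    exact ((h3.trans h4).trans_eq heq)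
  · -- Case B : `λ_{k+1} < A`.
    have hIcc : ∀ n : ℕ, Finset.Icc 1 n = Finset.Ioc 0 n := by
      intro n; ext x; simp; omega
    have hSsplit : ∑ ℓ ∈ Finset.Icc 1 k, lam ℓ
        = ∑ ℓ ∈ Finset.Icc 1 j, lam ℓ + ∑ ℓ ∈ Finset.Ioc j k, lam ℓ := by
      rw [hIcc, hIcc, Finset.sum_Ioc_consecutive _ (Nat.zero_le j) hkj]
    have hbound : ∑ ℓ ∈ Finset.Ioc j k, lam ℓ ≤ ((k:ℝ) - j) * A := by
      have hterm : ∀ ℓ ∈ Finset.Ioc j k, lam ℓ ≤ A := by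
        intro ℓ hℓ
        simp only [Finset.mem_Ioc] at hℓ
        exact (lt_of_le_of_lt
          (lam_mono hmono ℓ (k + 1) (by omega) (by omega)) hcase).le
      calc ∑ ℓ ∈ Finset.Ioc j k, lam ℓ ≤ (Finset.Ioc j k).card • A :=
            Finset.sum_le_card_nsmul _ _ _ hterm
        _ = ((k:ℝ) - j) * A := by
            rw [Nat.card_Ioc, nsmul_eq_mul, Nat.cast_sub hkj]
    have hSj : ∑ ℓ ∈ Finset.Icc 1 j, lam ℓ = (j:ℝ) * eigAvg lam j := by
      rw [eigAvg]; field_simp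
    have hbern2 : 1 + (1 + 2/D) * (C * T - 1) ≤ (C * T) ^ (1 + 2/D) := by
      have h2D : (0:ℝ) < 2/D := by positivity
      have h := one_add_mul_self_le_rpow_one_add (s := C * T - 1) (by linarith)
        (p := 1 + 2/D) (by linarith)
      rwa [show (1:ℝ) + (C * T - 1) = C * T by ring] at h
    have hlin : (j:ℝ) + ((k:ℝ) - j) * (1 + 4/D)
        = (j:ℝ) * (2 + 2 * (1 + 2/D) * (C * T - 1)) := by
      rw [hCdef, hTdef]
      field_simp
      ring
    have hTj : T * (j:ℝ) = (k:ℝ) := by rw [hTdef]; field_simp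
    have hRHSeq : 2 * C ^ (1 + 2/D) * T ^ (2/D) * eigAvg lam j * (k:ℝ)
        = eigAvg lam j * ((j:ℝ) * (2 * (C * T) ^ (1 + 2/D))) := by
      rw [Real.mul_rpow hC0.le hT0.le, Real.rpow_add hT0, Real.rpow_one, ← hTj]
      ring
    calc ∑ ℓ ∈ Finset.Icc 1 k, lam ℓ
        ≤ (j:ℝ) * eigAvg lam j + ((k:ℝ) - j) * A := by
          rw [hSsplit, hSj]; linarith
      _ = eigAvg lam j * ((j:ℝ) + ((k:ℝ) - j) * (1 + 4/D)) := by
          rw [hAdef]; ring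
      _ = eigAvg lam j * ((j:ℝ) * (2 + 2 * (1 + 2/D) * (C * T - 1))) := by
          rw [hlin]
      _ ≤ eigAvg lam j * ((j:ℝ) * (2 * (C * T) ^ (1 + 2/D))) := by
          apply mul_le_mul_of_nonneg_left _ havgj.le
          apply mul_le_mul_of_nonneg_left _ hj0.le
          linarith
      _ = 2 * C ^ (1 + 2/D) * T ^ (2/D) * eigAvg lam j * (k:ℝ) := by
          rw [hRHSeq]
end
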